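/- For a, b \in \mathbb{N}_0, \zeta_1^{des}(-a) \cdot \zeta_1^{des}(-b) = \sum_{i+j=b} (-1)^i \binom{b}{i} \zeta_2^{des}(-a-i, -j). -/

import Mathlib

/-- The multivariate power series `f(∑_{j ∈ S} t_j)` obtained by substituting the
sum of the variables indexed by `S` into the one-variable power series `f`. -/
noncomputable def substSum {r : ℕ} (f : PowerSeries ℚ) (S : Finset (Fin r)) :
    MvPowerSeries (Fin r) ℚ :=
  fun d => if d.support ⊆ S then
    (d.multinomial : ℚ) * PowerSeries.coeff (R := ℚ) (d.sum fun _ n => n) f else 0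

/-- `Zgen r f = ∏_{i=1}^r f(t_i + ⋯ + t_r)` as a formal power series in `t_1, …, t_r`. -/
noncomputable def Zgen (r : ℕ) (f : PowerSeries ℚ) : MvPowerSeries (Fin r) ℚ :=
  ∏ i : Fin r, substSum f (Finset.Ici i)

/-- View a power series in the variables `t_2, …, t_{r+1}` (i.e. in `r` variables)
as a power series in `t_1, …, t_{r+1}` not involving the first variable. -/
noncomputable def shiftVar {r : ℕ} (f : MvPowerSeries (Fin r) ℚ) :
    MvPowerSeries (Fin (r + 1)) ℚ :=
  fun d => if d 0 = 0 then
    f (Finsupp.comapDomain Fin.succ d (Fin.succ_injective r).injOn) else 0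

/-- The desingularized value `ζ_r^{des}(-k_1, …, -k_r)`: namely `k_1! ⋯ k_r!` times
the coefficient of `(-t_1)^{k_1} ⋯ (-t_r)^{k_r}` in `Zgen r f`. -/
noncomputable def zetaDes (r : ℕ) (f : PowerSeries ℚ) (k : Fin r → ℕ) : ℚ :=
  (∏ i, ((-1 : ℚ) ^ (k i) * (k i).factorial)) *
    MvPowerSeries.coeff (R := ℚ) (Finsupp.equivFunOnFinite.symm k) (Zgen r f)

lemma sum1 (d : Fin 1 →₀ ℕ) : (d.sum fun _ n => n) = d 0 := by
  rw [Finsupp.sum_fintype _ _ (fun _ => rfl), Fin.sum_univ_one]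

lemma sum2 (d : Fin 2 →₀ ℕ) : (d.sum fun _ n => n) = d 0 + d 1 := by
  rw [Finsupp.sum_fintype _ _ (fun _ => rfl), Fin.sum_univ_two]

lemma mult1 (d : Fin 1 →₀ ℕ) : d.multinomial = 1 := by
  show (((d.sum fun _ => id).factorial / d.prod fun _ n => n.factorial : ℕ)) = 1
  rw [Finsupp.sum_fintype _ _ (fun _ => rfl), Finsupp.prod_fintype _ _ (fun _ => rfl),
    Fin.sum_univ_one, Fin.prod_univ_one]
  simp [Nat.div_self, Nat.factorial_pos]

lemma mult2 (d : Fin 2 →₀ ℕ) : d.multinomial = (d 0 + d 1).choose (d 1) := by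
  show (((d.sum fun _ => id).factorial / d.prod fun _ n => n.factorial : ℕ)) = _
  rw [Finsupp.sum_fintype _ _ (fun _ => rfl), Finsupp.prod_fintype _ _ (fun _ => rfl),
    Fin.sum_univ_two, Fin.prod_univ_two, Nat.add_choose]
  rfl

lemma coeff_apply' {r : ℕ} (f : MvPowerSeries (Fin r) ℚ) (d : Fin r →₀ ℕ) :
    MvPowerSeries.coeff (R := ℚ) d f = f d := rfl

lemma zgen_one (F : PowerSeries ℚ) (d : Fin 1 →₀ ℕ) :
    Zgen 1 F d = PowerSeries.coeff (R := ℚ) (d 0) F := by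
  rw [Zgen, Fin.prod_univ_one]
  show (if d.support ⊆ Finset.Ici 0 then _ else _) = _
  rw [if_pos (by intro x _; exact Finset.mem_Ici.2 (Fin.zero_le _))]
  rw [mult1, sum1]
  simp

lemma zetaDes_one (F : PowerSeries ℚ) (k : ℕ) :
    zetaDes 1 F ![k] = (-1 : ℚ) ^ k * k.factorial * PowerSeries.coeff (R := ℚ) k F := by
  rw [zetaDes, Fin.prod_univ_one, coeff_apply', zgen_one]
  simp

lemma supp_ici_one (e : Fin 2 →₀ ℕ) : e.support ⊆ Finset.Ici 1 ↔ e 0 = 0 := by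
  have : Finset.Ici (1 : Fin 2) = {1} := by decide
  rw [this]
  constructor
  · intro h
    by_contra h0
    have := h (Finsupp.mem_support_iff.2 h0)
    simp at this
  · intro h0 x hx
    rw [Finsupp.mem_support_iff] at hx
    fin_cases x
    · exact absurd h0 hx
    · simp


lemma substSum_univ2 (F : PowerSeries ℚ) (e : Fin 2 →₀ ℕ) :
    substSum F (Finset.Ici (0 : Fin 2)) e =
      ((e 0 + e 1).choose (e 1) : ℚ) * PowerSeries.coeff (R := ℚ) (e 0 + e 1) F := by
  show (if _ then _ else _) = _
  have hs : e.support ⊆ Finset.Ici (0 : Fin 2) := fun x _ => by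
    simp [Fin.le_def]
  rw [if_pos hs, mult2, sum2]

lemma substSum_ici1 (F : PowerSeries ℚ) (e : Fin 2 →₀ ℕ) (h : e 0 = 0) :
    substSum F (Finset.Ici (1 : Fin 2)) e = PowerSeries.coeff (R := ℚ) (e 1) F := by
  show (if _ then _ else _) = _
  rw [if_pos ((supp_ici_one e).2 h), mult2, sum2, h]
  simp

lemma substSum_ici1_zero (F : PowerSeries ℚ) (e : Fin 2 →₀ ℕ) (h : e 0 ≠ 0) :
    substSum F (Finset.Ici (1 : Fin 2)) e = 0 := by
  show (if _ then _ else _) = _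
  exact if_neg (fun hc => h ((supp_ici_one e).1 hc))

lemma zgen_two (F : PowerSeries ℚ) (k₁ k₂ : ℕ) :
    Zgen 2 F (Finsupp.equivFunOnFinite.symm ![k₁, k₂]) =
      ∑ p ∈ Finset.HasAntidiagonal.antidiagonal k₂, ((k₁ + p.1).choose p.1 : ℚ) *
        PowerSeries.coeff (R := ℚ) (k₁ + p.1) F * PowerSeries.coeff (R := ℚ) p.2 F := by
  rw [Zgen, Fin.prod_univ_two]
  set d : Fin 2 →₀ ℕ := Finsupp.equivFunOnFinite.symm ![k₁, k₂] with hd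
  have hd0 : d 0 = k₁ := rfl
  have hd1 : d 1 = k₂ := rfl
  show MvPowerSeries.coeff (R := ℚ) d (substSum F (Finset.Ici 0) * substSum F (Finset.Ici 1)) = _
  rw [MvPowerSeries.coeff_mul]
  simp only [coeff_apply']
  have hzero : ∀ p ∈ Finset.HasAntidiagonal.antidiagonal d,
      substSum F (Finset.Ici 0) p.1 * substSum F (Finset.Ici 1) p.2 ≠ 0 → p.2 0 = 0 := by
    intro p _ hne
    by_contra h
    exact hne (by rw [substSum_ici1_zero F p.2 h, mul_zero])
  rw [← Finset.sum_filter_of_ne hzero]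
  refine Finset.sum_nbij' (i := fun p => (p.1 1, p.2 1))
    (j := fun q => (Finsupp.equivFunOnFinite.symm ![k₁, q.1], Finsupp.single 1 q.2))
    ?_ ?_ ?_ ?_ ?_
  · intro p hp
    rw [Finset.mem_filter, Finset.HasAntidiagonal.mem_antidiagonal] at hp
    rw [Finset.HasAntidiagonal.mem_antidiagonal]
    have := congrArg (fun f => f 1) hp.1
    simpa [Finsupp.add_apply, hd1] using this
  · intro q hq
    rw [Finset.HasAntidiagonal.mem_antidiagonal] at hq
    rw [Finset.mem_filter, Finset.HasAntidiagonal.mem_antidiagonal]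
    constructor
    · ext x
      fin_cases x
      · show k₁ + (Finsupp.single 1 q.2) 0 = d 0
        simp [hd0, Finsupp.single_apply]
      · show q.1 + (Finsupp.single 1 q.2) 1 = d 1
        simp [hd1, hq]
    · simp [Finsupp.single_apply]
  · intro p hp
    rw [Finset.mem_filter, Finset.HasAntidiagonal.mem_antidiagonal] at hp
    have h10 : p.1 0 = k₁ := by
      have := congrArg (fun f => f 0) hp.1
      simp only [Finsupp.add_apply, hp.2] at this
      simpa [hd0] using this
    refine Prod.ext ?_ ?_
    · ext x
      fin_cases x
      · simpa using h10.symm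
      · rfl
    · ext x
      fin_cases x
      · simpa [Finsupp.single_apply] using hp.2.symm
      · simp
  · intro q hq
    simp [Finsupp.single_apply]
  · intro p hp
    rw [Finset.mem_filter, Finset.HasAntidiagonal.mem_antidiagonal] at hp
    have h10 : p.1 0 = k₁ := by
      have := congrArg (fun f => f 0) hp.1
      simp only [Finsupp.add_apply, hp.2] at this
      simpa [hd0] using this
    rw [substSum_univ2, substSum_ici1 F p.2 hp.2, h10]

lemma tri (b : ℕ) (f : ℕ → ℕ → ℚ) :
    ∑ i ∈ Finset.range (b+1), ∑ s ∈ Finset.range (b-i+1), f i s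
      = ∑ n ∈ Finset.range (b+1), ∑ i ∈ Finset.range (n+1), f i (n-i) := by
  rw [Finset.sum_sigma', Finset.sum_sigma']
  refine Finset.sum_nbij' (i := fun p => ⟨p.1 + p.2, p.1⟩) (j := fun q => ⟨q.2, q.1 - q.2⟩)
    ?_ ?_ ?_ ?_ ?_
  · intro p hp
    simp only [Finset.mem_sigma, Finset.mem_range] at hp ⊢
    omega
  · intro q hq
    simp only [Finset.mem_sigma, Finset.mem_range] at hq ⊢
    omega
  · intro p hp
    simp
  · intro q hq
    simp only [Finset.mem_sigma, Finset.mem_range] at hq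
    refine Sigma.ext ?_ ?_ <;> simp <;> omega
  · intro p hp
    simp

lemma key (a b n i : ℕ) (hi : i ≤ n) (hn : n ≤ b) :
    (b.choose i : ℚ) * (a+i).factorial * (b-i).factorial * ((a+n).choose (n-i)) * n.factorial
      = (n.choose i : ℚ) * b.factorial * (a+n).factorial := by
  have h1 := Nat.choose_mul_factorial_mul_factorial (hi.trans hn)
  have h2 := Nat.choose_mul_factorial_mul_factorial (show n - i ≤ a + n by omega)
  rw [show a + n - (n - i) = a + i by omega] at h2
  have h3 := Nat.choose_mul_factorial_mul_factorial hi
  have h1q : (b.choose i : ℚ) * i.factorial * (b-i).factorial = b.factorial := by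
    exact_mod_cast h1
  have h2q : ((a+n).choose (n-i) : ℚ) * (n-i).factorial * (a+i).factorial
      = (a+n).factorial := by exact_mod_cast h2
  have h3q : (n.choose i : ℚ) * i.factorial * (n-i).factorial = n.factorial := by
    exact_mod_cast h3
  linear_combination ((n.choose i : ℚ) * (a+n).factorial) * h1q
    + ((n.choose i : ℚ) * (b.choose i) * i.factorial * (b-i).factorial) * h2q
    - ((b.choose i : ℚ) * ((a+n).choose (n-i)) * (a+i).factorial * (b-i).factorial) * h3q

lemma alt_sum (n : ℕ) (hn : n ≠ 0) :
    ∑ i ∈ Finset.range (n+1), (-1 : ℚ)^i * (n.choose i) = 0 := by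
  have h := Int.alternating_sum_range_choose (n := n)
  rw [if_neg hn] at h
  have : ((∑ i ∈ Finset.range (n+1), (-1 : ℤ)^i * (n.choose i) : ℤ) : ℚ)
      = ∑ i ∈ Finset.range (n+1), (-1 : ℚ)^i * (n.choose i) := by push_cast; ring
  rw [← this, h]
  norm_num

lemma rhs_eval (c : ℕ → ℚ) (a b : ℕ) :
    ∑ i ∈ Finset.range (b+1), ∑ s ∈ Finset.range (b-i+1),
      (-1:ℚ)^i * (b.choose i) * ((-1:ℚ)^(a+i) * (a+i).factorial)
        * ((-1:ℚ)^(b-i) * (b-i).factorial)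
        * (((a+i+s).choose s : ℚ) * c (a+i+s) * c (b-i-s))
    = ((-1:ℚ)^a * a.factorial * c a) * ((-1:ℚ)^b * b.factorial * c b) := by
  rw [tri]
  rw [Finset.sum_eq_single 0]
  · simp [Nat.choose]
    ring
  · intro n hn hn0
    rw [Finset.mem_range] at hn
    have hnb : n ≤ b := by omega
    have hmain : (∑ i ∈ Finset.range (n+1),
        (-1:ℚ)^i * (b.choose i) * ((-1:ℚ)^(a+i) * (a+i).factorial)
          * ((-1:ℚ)^(b-i) * (b-i).factorial)
          * (((a+i+(n-i)).choose (n-i) : ℚ) * c (a+i+(n-i)) * c (b-i-(n-i))))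
        * n.factorial = 0 := by
    -- rewrite each term and factor
      rw [Finset.sum_mul]
      have : ∀ i ∈ Finset.range (n+1),
          ((-1:ℚ)^i * (b.choose i) * ((-1:ℚ)^(a+i) * (a+i).factorial)
            * ((-1:ℚ)^(b-i) * (b-i).factorial)
            * (((a+i+(n-i)).choose (n-i) : ℚ) * c (a+i+(n-i)) * c (b-i-(n-i))))
            * n.factorial
          = ((-1:ℚ)^(a+b) * c (a+n) * c (b-n) * b.factorial * (a+n).factorial)
            * ((-1:ℚ)^i * (n.choose i)) := by
        intro i hi
        rw [Finset.mem_range] at hi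
        have hi' : i ≤ n := by omega
        rw [show a+i+(n-i) = a+n by omega, show b-i-(n-i) = b-n by omega]
        have hsgn : ((-1:ℚ))^(a+i) * (-1)^(b-i) = (-1)^(a+b) := by
          rw [← pow_add]
          have : a + i + (b - i) = a + b := by omega
          rw [this]
        have hkey := key a b n i hi' hnb
        linear_combination ((-1:ℚ)^i * c (a+n) * c (b-n)
            * ((b.choose i : ℚ) * (a+i).factorial * (b-i).factorial
              * ((a+n).choose (n-i)) * n.factorial)) * hsgn
          + ((-1:ℚ)^i * c (a+n) * c (b-n) * (-1:ℚ)^(a+b)) * hkey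
      rw [Finset.sum_congr rfl this, ← Finset.mul_sum, alt_sum n hn0, mul_zero]
    have hf : (n.factorial : ℚ) ≠ 0 := by
      exact_mod_cast n.factorial_ne_zero
    exact (mul_eq_zero.1 hmain).resolve_right hf
  · simp

lemma zetaDes_two (F : PowerSeries ℚ) (k₁ k₂ : ℕ) :
    zetaDes 2 F ![k₁, k₂] = ((-1:ℚ)^k₁ * k₁.factorial) * ((-1:ℚ)^k₂ * k₂.factorial) *
      ∑ p ∈ Finset.HasAntidiagonal.antidiagonal k₂, ((k₁ + p.1).choose p.1 : ℚ) *
        PowerSeries.coeff (R := ℚ) (k₁ + p.1) F * PowerSeries.coeff (R := ℚ) p.2 F := by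
  rw [zetaDes, Fin.prod_univ_two, coeff_apply', zgen_two]
  simp


/-- Depth `(1,1)` shuffle-type product: for `a, b ∈ ℕ₀`,
`ζ_1^{des}(-a) ζ_1^{des}(-b) = ∑_{i+j=b} (-1)^i C(b,i) ζ_2^{des}(-a-i, -j)`. -/
theorem zetaDes_shuffle_one_one (F : PowerSeries ℚ)
    (hF : (PowerSeries.exp ℚ - 1) ^ 2 * F =
      (1 - PowerSeries.X) * PowerSeries.exp ℚ - 1) (a b : ℕ) :
    zetaDes 1 F ![a] * zetaDes 1 F ![b] =
      ∑ m ∈ Finset.HasAntidiagonal.antidiagonal b,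
        (-1 : ℚ) ^ m.1 * (b.choose m.1 : ℚ) * zetaDes 2 F ![a + m.1, m.2] := by
  rw [zetaDes_one, zetaDes_one, Finset.Nat.sum_antidiagonal_eq_sum_range_succ_mk,
    ← rhs_eval (fun n => PowerSeries.coeff (R := ℚ) n F) a b]
  refine Finset.sum_congr rfl fun i hi => ?_
  rw [zetaDes_two, Finset.Nat.sum_antidiagonal_eq_sum_range_succ_mk]
  simp only [Finset.mul_sum]
  refine Finset.sum_congr rfl fun s hs => ?_
  ring
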